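/- Let X ⊆ ℝ^q, let f : X → ℝ^p be regression functions, let t : X → ℝ, and fix t* ∈ t(X). Set X̃ = {x ∈ X : t(x) = t*}, let f̃ : X̃ → ℝ^m have linearly independent component functions, and suppose there exists a matrix C ∈ ℝ^{p×m} of full column rank with f(x) = C·f̃(x) for all x ∈ X̃. Let ξ be a design on X with ξ(X̃) > 0, and let ξ̃ be the conditional design on X̃ defined by ξ̃({x}) = ξ({x})/ξ(X̃) for x ∈ X̃. If ξ is admissible for f among all designs on X, then ξ̃ is admissible for f̃ among all designs on X̃. -/

import Mathlib

open Matrix Set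

noncomputable section

/-- A (finitely supported) approximate design on a design space `X`. -/
def IsDesign {α : Type*} (X : Set α) (ξ : α → ℝ) : Prop :=
  (Function.support ξ).Finite ∧ (∀ x, 0 ≤ ξ x) ∧
    Function.support ξ ⊆ X ∧ ∑ᶠ x, ξ x = 1

/-- The information matrix of a design `ξ` for regression functions `f`. -/
def infoMatrix {α ι : Type*} [Fintype ι] (f : α → ι → ℝ) (ξ : α → ℝ) :
    Matrix ι ι ℝ :=
  ∑ᶠ x, ξ x • Matrix.vecMulVec (f x) (f x)

/-- An information function: positively homogeneous, superadditive, nonnegative,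
non-constant and upper semicontinuous on the nonnegative definite matrices. -/
def IsInfoFun {ι : Type*} [Fintype ι] (φ : Matrix ι ι ℝ → ℝ) : Prop :=
  (∀ M : Matrix ι ι ℝ, M.PosSemidef → 0 ≤ φ M) ∧
  (∀ c : ℝ, 0 < c → ∀ M : Matrix ι ι ℝ, M.PosSemidef → φ (c • M) = c * φ M) ∧
  (∀ M N : Matrix ι ι ℝ, M.PosSemidef → N.PosSemidef → φ M + φ N ≤ φ (M + N)) ∧
  (∃ M N : Matrix ι ι ℝ, M.PosSemidef ∧ N.PosSemidef ∧ φ M ≠ φ N) ∧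
  UpperSemicontinuousOn φ {M : Matrix ι ι ℝ | M.PosSemidef}

/-- A `φ`-optimal design. -/
def IsOptimalDesign {α ι : Type*} [Fintype ι] (X : Set α) (f : α → ι → ℝ)
    (φ : Matrix ι ι ℝ → ℝ) (ξ : α → ℝ) : Prop :=
  IsDesign X ξ ∧ ∀ η, IsDesign X η → φ (infoMatrix f η) ≤ φ (infoMatrix f ξ)

/-- Admissibility of a design in the Loewner ordering. -/
def IsAdmissible {α ι : Type*} [Fintype ι] (X : Set α) (f : α → ι → ℝ) (ξ : α → ℝ) : Prop :=
  IsDesign X ξ ∧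
    ¬ ∃ η, IsDesign X η ∧ (infoMatrix f η - infoMatrix f ξ).PosSemidef ∧
      infoMatrix f η ≠ infoMatrix f ξ

/-- The smallest eigenvalue of a matrix. -/
def lamMin {ι : Type*} [Fintype ι] (M : Matrix ι ι ℝ) : ℝ :=
  sInf {r : ℝ | ∃ v : ι → ℝ, v ≠ 0 ∧ M *ᵥ v = r • v}

lemma auxSmulPSD {n : Type*} [Fintype n] {c : ℝ} (hc : 0 ≤ c) {M : Matrix n n ℝ}
    (hM : M.PosSemidef) : (c • M).PosSemidef := by
  refine ⟨?_, fun x => ?_⟩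
  · unfold Matrix.IsHermitian
    rw [conjTranspose_smul, hM.1.eq]
    simp
  · have h := mul_nonneg hc (hM.2 x)
    simp only [Matrix.smul_apply, smul_eq_mul, Finsupp.sum, Finset.mul_sum] at h ⊢
    exact h.trans_eq (Finset.sum_congr rfl fun i _ => Finset.sum_congr rfl fun j _ => by ring)

lemma auxVecMulVec {p m : ℕ} (C : Matrix (Fin p) (Fin m) ℝ) (v : Fin m → ℝ) :
    vecMulVec (C *ᵥ v) (C *ᵥ v) = C * vecMulVec v v * Cᵀ := by
  ext i j
  simp only [vecMulVec_apply, mul_apply, mulVec, dotProduct, transpose_apply,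
    Finset.sum_mul, Finset.mul_sum]
  apply Finset.sum_congr rfl
  intro k _
  apply Finset.sum_congr rfl
  intro l _
  ring

lemma auxInj {p m : ℕ} (C : Matrix (Fin p) (Fin m) ℝ) (hC : C.rank = m) :
    Function.Injective C.mulVec := by
  have h := LinearMap.finrank_range_add_finrank_ker C.mulVecLin
  rw [Module.finrank_fin_fun] at h
  have hr : Module.finrank ℝ (LinearMap.range C.mulVecLin) = m := hC
  have hker : Module.finrank ℝ (LinearMap.ker C.mulVecLin) = 0 := by omega
  have : LinearMap.ker C.mulVecLin = ⊥ := Submodule.finrank_eq_zero.mp hker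
  exact LinearMap.ker_eq_bot.mp this

lemma auxZero {p m : ℕ} (C : Matrix (Fin p) (Fin m) ℝ)
    (hinj : Function.Injective C.mulVec)
    (M : Matrix (Fin m) (Fin m) ℝ) (h : C * M = 0) : M = 0 := by
  have hv : ∀ v, M *ᵥ v = 0 := by
    intro v
    apply hinj
    rw [mulVec_mulVec, h, zero_mulVec, mulVec_zero]
  ext i j
  have := congrFun (hv (Pi.single j 1)) i
  simpa [mulVec_single] using this

lemma auxCDCt {p m : ℕ} (C : Matrix (Fin p) (Fin m) ℝ)
    (hinj : Function.Injective C.mulVec)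
    (D : Matrix (Fin m) (Fin m) ℝ) (hD : Dᵀ = D) (h : C * D * Cᵀ = 0) : D = 0 := by
  have h1 : C * (D * Cᵀ) = 0 := by rw [← Matrix.mul_assoc]; exact h
  have h2 : D * Cᵀ = 0 := by
    have hv : ∀ v, (D * Cᵀ) *ᵥ v = 0 := by
      intro v
      apply hinj
      rw [mulVec_mulVec, h1, zero_mulVec, mulVec_zero]
    ext i j
    have := congrFun (hv (Pi.single j 1)) i
    simpa [mulVec_single] using this
  have h3 : C * Dᵀ = 0 := by
    have := congrArg Matrix.transpose h2
    rwa [transpose_mul, transpose_transpose, transpose_zero] at this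
  rw [hD] at h3
  exact auxZero C hinj D h3

/-- Theorem 3: admissibility of a design implies admissibility of each of its
conditional designs in the corresponding conditional model. -/
theorem admissible_implies_conditional_admissible
    {q p m : ℕ} (X : Set (Fin q → ℝ))
    (f : (Fin q → ℝ) → Fin p → ℝ)
    (t : (Fin q → ℝ) → ℝ) (tstar : ℝ) (htstar : tstar ∈ t '' X)
    (Xt : Set (Fin q → ℝ)) (hXt : Xt = {x ∈ X | t x = tstar})
    (ft : (Fin q → ℝ) → Fin m → ℝ)
    (hli : LinearIndependent ℝ (fun j : Fin m => fun x : Xt => ft (x : Fin q → ℝ) j))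
    (C : Matrix (Fin p) (Fin m) ℝ) (hC : C.rank = m)
    (hCf : ∀ x ∈ Xt, f x = C *ᵥ ft x)
    (ξ : (Fin q → ℝ) → ℝ)
    (mass : ℝ) (hmass : mass = ∑ᶠ x ∈ Xt, ξ x) (hpos : 0 < mass)
    (ξt : (Fin q → ℝ) → ℝ)
    (hξt_in : ∀ x ∈ Xt, ξt x = ξ x / mass)
    (hξt_out : ∀ x ∉ Xt, ξt x = 0)
    (hadm : IsAdmissible X f ξ) :
    IsAdmissible Xt ft ξt := by
  classical
  obtain ⟨⟨hfinξ, hξ0, hξX, hξ1⟩, hnd⟩ := hadm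
  have hmne : mass ≠ 0 := ne_of_gt hpos
  have hξt_eq : ∀ x, ξt x = (Set.indicator Xt ξ x) / mass := by
    intro x
    by_cases hx : x ∈ Xt
    · rw [hξt_in x hx, Set.indicator_of_mem hx]
    · rw [hξt_out x hx, Set.indicator_of_notMem hx, zero_div]
  have hsupp_ξt : Function.support ξt ⊆ Function.support ξ := by
    intro x hx
    simp only [Function.mem_support] at hx ⊢
    intro h0
    apply hx
    rw [hξt_eq x]
    by_cases hxt : x ∈ Xt
    · rw [Set.indicator_of_mem hxt, h0, zero_div]
    · rw [Set.indicator_of_notMem hxt, zero_div]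
  have hsuppXt : Function.support ξt ⊆ Xt := by
    intro x hx
    by_contra hxt
    exact hx (hξt_out x hxt)
  have hfinξt : (Function.support ξt).Finite := hfinξ.subset hsupp_ξt
  set sξ := hfinξ.toFinset with hsξ
  have hsubξ : Function.support ξ ⊆ ↑sξ := by simp [hsξ]
  have hmass_sum : mass = ∑ x ∈ sξ, Set.indicator Xt ξ x := by
    rw [hmass, finsum_mem_def, finsum_eq_finset_sum_of_support_subset]
    intro x hx
    apply hsubξ
    simp only [Function.mem_support] at hx ⊢
    intro h
    exact hx (by simp [Set.indicator_apply, h])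
  have hsum_ξt : ∑ᶠ x, ξt x = 1 := by
    rw [finsum_eq_finset_sum_of_support_subset _ (hsupp_ξt.trans hsubξ)]
    simp only [hξt_eq]
    rw [← Finset.sum_div, ← hmass_sum, div_self hmne]
  have hξt0 : ∀ x, 0 ≤ ξt x := by
    intro x
    rw [hξt_eq x]
    exact div_nonneg (Set.indicator_nonneg (fun y _ => hξ0 y) x) hpos.le
  have hdesign_ξt : IsDesign Xt ξt := ⟨hfinξt, hξt0, hsuppXt, hsum_ξt⟩
  refine ⟨hdesign_ξt, ?_⟩
  rintro ⟨η, ⟨hfinη, hη0, hηXt, hη1⟩, hPSD, hne⟩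
  apply hnd
  set η' : (Fin q → ℝ) → ℝ := fun x => if x ∈ Xt then mass * η x else ξ x with hη'def
  set s : Finset (Fin q → ℝ) := (hfinξ.union hfinη).toFinset with hs
  have hsubξs : Function.support ξ ⊆ ↑s := by
    intro x hx; simp [hs]; exact Or.inl hx
  have hsubηs : Function.support η ⊆ ↑s := by
    intro x hx; simp [hs]; exact Or.inr hx
  have hsubξts : Function.support ξt ⊆ ↑s := hsupp_ξt.trans hsubξs
  have hsubη's : Function.support η' ⊆ ↑s := by
    intro x hx
    simp only [Function.mem_support, hη'def] at hx
    by_cases hxt : x ∈ Xt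
    · rw [if_pos hxt] at hx
      exact hsubηs (by simpa using right_ne_zero_of_mul hx)
    · rw [if_neg hxt] at hx
      exact hsubξs hx
  -- scalar identity
  have hξeq : ∀ x ∈ Xt, ξ x = mass * ξt x := by
    intro x hx
    rw [hξt_in x hx]
    field_simp
  have hηout : ∀ x ∉ Xt, η x = 0 := by
    intro x hx
    by_contra h0
    exact hx (hηXt h0)
  have hsc : ∀ x, η' x - ξ x = mass * (η x - ξt x) := by
    intro x
    by_cases hxt : x ∈ Xt
    · simp only [hη'def, if_pos hxt]
      rw [hξeq x hxt]
      ring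
    · simp only [hη'def, if_neg hxt]
      rw [hηout x hxt, hξt_out x hxt]
      ring
  -- info matrices as finset sums
  have hsum_fn : ∀ (g : (Fin q → ℝ) → ℝ) (F : (Fin q → ℝ) → Fin p → ℝ),
      Function.support g ⊆ ↑s →
      infoMatrix F g = ∑ x ∈ s, g x • Matrix.vecMulVec (F x) (F x) := by
    intro g F hg
    exact finsum_eq_finset_sum_of_support_subset _
      ((Function.support_smul_subset_left _ _).trans hg)
  have hsum_fnm : ∀ (g : (Fin q → ℝ) → ℝ),
      Function.support g ⊆ ↑s →
      infoMatrix ft g = ∑ x ∈ s, g x • Matrix.vecMulVec (ft x) (ft x) := by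
    intro g hg
    exact finsum_eq_finset_sum_of_support_subset _
      ((Function.support_smul_subset_left _ _).trans hg)
  have key : ∀ x, η' x • vecMulVec (f x) (f x) - ξ x • vecMulVec (f x) (f x)
      = C * (mass • (η x • vecMulVec (ft x) (ft x) - ξt x • vecMulVec (ft x) (ft x))) * Cᵀ := by
    intro x
    by_cases hxt : x ∈ Xt
    · rw [← sub_smul, hsc x, hCf x hxt, auxVecMulVec C (ft x)]
      rw [← sub_smul, Matrix.mul_smul, Matrix.smul_mul, Matrix.mul_smul, Matrix.smul_mul,
        smul_smul]
    · have h1 : η' x = ξ x := by simp only [hη'def, if_neg hxt]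
      rw [h1, sub_self, hηout x hxt, hξt_out x hxt]
      simp
  have hM : infoMatrix f η' - infoMatrix f ξ
      = C * (mass • (infoMatrix ft η - infoMatrix ft ξt)) * Cᵀ := by
    rw [hsum_fn η' f hsubη's, hsum_fn ξ f hsubξs, hsum_fnm η hsubηs, hsum_fnm ξt hsubξts]
    rw [← Finset.sum_sub_distrib, ← Finset.sum_sub_distrib, Finset.smul_sum,
      Matrix.mul_sum, Matrix.sum_mul]
    exact Finset.sum_congr rfl fun x _ => key x
  -- design property of η'
  have hξ1s : ∑ x ∈ s, ξ x = 1 := by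
    rw [← finsum_eq_finset_sum_of_support_subset _ hsubξs]; exact hξ1
  have hη1s : ∑ x ∈ s, η x = 1 := by
    rw [← finsum_eq_finset_sum_of_support_subset _ hsubηs]; exact hη1
  have hξt1s : ∑ x ∈ s, ξt x = 1 := by
    rw [← finsum_eq_finset_sum_of_support_subset _ hsubξts]; exact hsum_ξt
  have hdesη' : IsDesign X η' := by
    refine ⟨?_, ?_, ?_, ?_⟩
    · exact ((hfinξ.union hfinη).subset (by simpa [hs] using hsubη's))
    · intro x
      by_cases hxt : x ∈ Xt
      · simp only [hη'def, if_pos hxt]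
        exact mul_nonneg hpos.le (hη0 x)
      · simp only [hη'def, if_neg hxt]
        exact hξ0 x
    · intro x hx
      by_cases hxt : x ∈ Xt
      · rw [hXt] at hxt
        exact hxt.1
      · apply hξX
        simp only [Function.mem_support, hη'def, if_neg hxt] at hx
        exact hx
    · rw [finsum_eq_finset_sum_of_support_subset _ hsubη's]
      have : ∀ x, η' x = ξ x + mass * (η x - ξt x) := by
        intro x
        have := hsc x
        linarith
      simp only [this]
      rw [Finset.sum_add_distrib, hξ1s, ← Finset.mul_sum, Finset.sum_sub_distrib,
        hη1s, hξt1s]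
      ring
  have hinj := auxInj C hC
  have hDher : (mass • (infoMatrix ft η - infoMatrix ft ξt))ᵀ
      = mass • (infoMatrix ft η - infoMatrix ft ξt) := by
    have h := hPSD.1.eq
    have : (infoMatrix ft η - infoMatrix ft ξt)ᵀ = infoMatrix ft η - infoMatrix ft ξt := by
      simpa [Matrix.conjTranspose_eq_transpose_of_trivial] using h
    rw [Matrix.transpose_smul, this]
  have hCt : Cᵀ = Cᴴ := by
    ext i j
    simp [Matrix.conjTranspose_apply]
  refine ⟨η', hdesη', ?_, ?_⟩
  · rw [hM, hCt]
    exact (auxSmulPSD hpos.le hPSD).mul_mul_conjTranspose_same C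
  · intro heq
    have h0 : infoMatrix f η' - infoMatrix f ξ = 0 := by rw [heq, sub_self]
    rw [hM] at h0
    have hD0 := auxCDCt C hinj _ hDher h0
    have : infoMatrix ft η - infoMatrix ft ξt = 0 := by
      rcases smul_eq_zero.mp hD0 with h | h
      · exact absurd h hmne
      · exact h
    exact hne (sub_eq_zero.mp this)
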